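/- If f: ℕ → E(q) is q-holonomic and h: ℕ → ℕ is an affine map h(n) = αn + β with α, β ∈ ℕ, then the composite n ↦ f(αn + β) is q-holonomic. -/

import Mathlib

open scoped BigOperators

/-- A sequence `f : ℕ → E(q)` is `q`-holonomic if it satisfies a nontrivial linear
recursion `∑_{j=0}^d a_j(q, qⁿ) f(n+j) = 0` with coefficients `a_j ∈ E[u,v]`, not all zero. -/
def IsQHolonomic {E : Type} [Field E] (f : ℕ → RatFunc E) : Prop :=
  ∃ (d : ℕ) (a : ℕ → MvPolynomial (Fin 2) E),
    (∃ j ≤ d, a j ≠ 0) ∧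
    ∀ n : ℕ, ∑ j ∈ Finset.range (d + 1),
      (MvPolynomial.aeval ![RatFunc.X, (RatFunc.X : RatFunc E) ^ n] (a j)) * f (n + j) = 0

namespace QHolAux

open Polynomial Filter

noncomputable section

variable {E : Type} [Field E]

/-- `E[u][v]`. -/
abbrev RR (E : Type) [Field E] : Type := Polynomial (Polynomial E)

/-- Evaluation at `(X, X^m)`. -/
noncomputable def psi (E : Type) [Field E] (m : ℕ) : RR E →ₐ[Polynomial E] RatFunc E :=
  Polynomial.aeval ((RatFunc.X : RatFunc E) ^ m)

lemma psi_C (m : ℕ) (q : Polynomial E) :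
    psi E m (Polynomial.C q) = algebraMap (Polynomial E) (RatFunc E) q := by
  simp [psi]

lemma psi_X (m : ℕ) : psi E m (Polynomial.X) = (RatFunc.X : RatFunc E) ^ m := by
  simp [psi]

/-- Core nonvanishing lemma: a nonzero `p ∈ E[u][v]` evaluated at `v := u^m`
is nonzero for all large `m`. -/
lemma eval_pow_ne_zero {p : RR E} (hp : p ≠ 0) :
    ∃ N : ℕ, ∀ m ≥ N, p.eval ((Polynomial.X : Polynomial E) ^ m) ≠ 0 := by
  classical
  set J := p.natDegree with hJ
  refine ⟨(Finset.range (J + 1)).sup (fun j => (p.coeff j).natDegree) + 1, fun m hm => ?_⟩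
  have hmj : ∀ j ∈ Finset.range (J + 1), (p.coeff j).natDegree + 1 ≤ m := by
    intro j hj
    have := Finset.le_sup (f := fun j => (p.coeff j).natDegree) hj
    omega
  set K := (p.coeff J).natDegree + m * J with hK
  have key : (p.eval ((Polynomial.X : Polynomial E) ^ m)).coeff K
      = (p.coeff J).leadingCoeff := by
    rw [Polynomial.eval_eq_sum_range, Polynomial.finset_sum_coeff]
    have hterm : ∀ j ∈ Finset.range (J + 1), j ≠ J →
        (p.coeff j * ((Polynomial.X : Polynomial E) ^ m) ^ j).coeff K = 0 := by
      intro j hj hjJ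
      have hjJ' : j < J := by
        rcases Finset.mem_range.mp hj with h
        omega
      rw [← pow_mul, Polynomial.coeff_mul_X_pow']
      have hle : m * j ≤ K := by
        have : m * j ≤ m * J := Nat.mul_le_mul_left m (le_of_lt hjJ')
        omega
      rw [if_pos hle]
      apply Polynomial.coeff_eq_zero_of_natDegree_lt
      have h1 : (p.coeff j).natDegree + 1 ≤ m := hmj j hj
      have h2 : m ≤ m * (J - j) := Nat.le_mul_of_pos_right m (by omega)
      have h3 : m * (J - j) ≤ K - m * j := by
        have : m * j + m * (J - j) = m * J := by
          rw [← Nat.mul_add]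
          congr 1
          omega
        omega
      omega
    rw [Finset.sum_eq_single_of_mem J (Finset.mem_range.mpr (Nat.lt_succ_self J)) hterm]
    rw [← pow_mul, Polynomial.coeff_mul_X_pow']
    rw [if_pos (by omega : m * J ≤ K)]
    have : K - m * J = (p.coeff J).natDegree := by omega
    rw [this, Polynomial.coeff_natDegree]
  intro h0
  have hlc : p.coeff J ≠ 0 := by
    simpa [hJ] using Polynomial.leadingCoeff_ne_zero.mpr hp
  have : (p.coeff J).leadingCoeff ≠ 0 := Polynomial.leadingCoeff_ne_zero.mpr hlc
  rw [h0] at key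
  simp at key
  exact this key.symm

lemma psi_eq_algebraMap_eval (m : ℕ) (p : RR E) :
    psi E m p = algebraMap (Polynomial E) (RatFunc E)
      (p.eval ((Polynomial.X : Polynomial E) ^ m)) := by
  rw [psi, ← RatFunc.algebraMap_X, ← map_pow,
    Polynomial.aeval_algebraMap_apply_eq_algebraMap_eval]

lemma psi_ne_zero {p : RR E} (hp : p ≠ 0) :
    ∃ N : ℕ, ∀ m ≥ N, psi E m p ≠ 0 := by
  obtain ⟨N, hN⟩ := eval_pow_ne_zero hp
  refine ⟨N, fun m hm h0 => hN m hm ?_⟩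
  rw [psi_eq_algebraMap_eval] at h0
  exact IsFractionRing.injective (Polynomial E) (RatFunc E) (by simpa using h0)

/-- Substitution `v ↦ u^c * v^a`. -/
noncomputable def chi (E : Type) [Field E] (c a : ℕ) : RR E →ₐ[Polynomial E] RR E :=
  Polynomial.aeval (Polynomial.C ((Polynomial.X : Polynomial E) ^ c) * Polynomial.X ^ a)

lemma psi_chi (c a n : ℕ) (p : RR E) :
    psi E n (chi E c a p) = psi E (a * n + c) p := by
  have h : (psi E n).comp (chi E c a) = psi E (a * n + c) := by
    apply Polynomial.algHom_ext
    rw [AlgHom.comp_apply]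
    show psi E n (chi E c a Polynomial.X) = psi E (a * n + c) Polynomial.X
    rw [show chi E c a Polynomial.X
        = Polynomial.C ((Polynomial.X : Polynomial E) ^ c) * Polynomial.X ^ a from
      Polynomial.aeval_X _]
    simp only [map_mul, map_pow, psi_C, psi_X, RatFunc.algebraMap_X]
    rw [← pow_mul, ← pow_add]
    congr 1
    ring
  exact congrFun (congrArg (fun (g : RR E →ₐ[Polynomial E] RatFunc E) => g.toFun) h) p

/-- Germs of sequences at infinity. -/
abbrev G (E : Type) [Field E] : Type := Filter.Germ (Filter.atTop : Filter ℕ) (RatFunc E)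

noncomputable def ofG (E : Type) [Field E] : (ℕ → RatFunc E) →+* G E :=
  Filter.Germ.coeRingHom _

lemma ofG_eq {s t : ℕ → RatFunc E} :
    ofG E s = ofG E t ↔ s =ᶠ[Filter.atTop] t := Filter.Germ.coe_eq

lemma ofG_eq_zero {s : ℕ → RatFunc E} :
    ofG E s = 0 ↔ ∀ᶠ n in Filter.atTop, s n = 0 := by
  rw [← map_zero (ofG E), ofG_eq]
  rfl

lemma isUnit_ofG {s : ℕ → RatFunc E} (h : ∀ᶠ n in Filter.atTop, s n ≠ 0) :
    IsUnit (ofG E s) := by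
  refine IsUnit.of_mul_eq_one (ofG E (fun n => (s n)⁻¹)) ?_
  rw [← map_mul, ← map_one (ofG E), ofG_eq]
  filter_upwards [h] with n hn
  exact mul_inv_cancel₀ hn

noncomputable def Phi (E : Type) [Field E] : RR E →+* G E :=
  (ofG E).comp (Pi.ringHom fun n => (psi E n).toRingHom)

lemma Phi_apply (p : RR E) : Phi E p = ofG E (fun n => psi E n p) := rfl

lemma isUnit_Phi {p : RR E} (hp : p ≠ 0) : IsUnit (Phi E p) := by
  obtain ⟨N, hN⟩ := psi_ne_zero hp
  refine isUnit_ofG ?_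
  rw [Filter.eventually_atTop]
  exact ⟨N, hN⟩

noncomputable def PhiF (E : Type) [Field E] : FractionRing (RR E) →+* G E :=
  IsLocalization.lift (M := nonZeroDivisors (RR E)) (g := Phi E)
    (fun y => isUnit_Phi (mem_nonZeroDivisors_iff_ne_zero.mp y.2))

lemma PhiF_algebraMap (p : RR E) :
    PhiF E (algebraMap (RR E) (FractionRing (RR E)) p) = Phi E p :=
  IsLocalization.lift_eq _ _

/-- From `MvPolynomial (Fin 2) E` to `E[u][v]`. -/
noncomputable def Sh (E : Type) [Field E] : MvPolynomial (Fin 2) E →ₐ[E] RR E :=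
  MvPolynomial.aeval ![Polynomial.C Polynomial.X, Polynomial.X]

/-- From `E[u][v]` to `MvPolynomial (Fin 2) E`. -/
noncomputable def Th (E : Type) [Field E] : RR E →+* MvPolynomial (Fin 2) E :=
  Polynomial.eval₂RingHom
    (Polynomial.eval₂RingHom MvPolynomial.C (MvPolynomial.X 0)) (MvPolynomial.X 1)

lemma Th_Sh (p : MvPolynomial (Fin 2) E) : Th E (Sh E p) = p := by
  have h : (Th E).comp (Sh E).toRingHom = RingHom.id _ := by
    apply MvPolynomial.ringHom_ext
    · intro e
      simp [Sh, Th, Polynomial.algebraMap_apply]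
    · intro i
      fin_cases i <;> simp [Sh, Th]
  exact RingHom.congr_fun h p

lemma Sh_psi (n : ℕ) (p : MvPolynomial (Fin 2) E) :
    psi E n (Sh E p) =
      MvPolynomial.aeval ![RatFunc.X, (RatFunc.X : RatFunc E) ^ n] p := by
  have h : ((psi E n).toRingHom).comp (Sh E).toRingHom =
      (MvPolynomial.aeval ![RatFunc.X, (RatFunc.X : RatFunc E) ^ n]).toRingHom := by
    apply MvPolynomial.ringHom_ext
    · intro e
      simp [Sh, psi, Polynomial.algebraMap_apply,
        IsScalarTower.algebraMap_apply E (Polynomial E) (RatFunc E)]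
    · intro i
      fin_cases i <;>
        simp [Sh, psi_C, psi_X, RatFunc.algebraMap_X]
  exact RingHom.congr_fun h p

lemma Th_psi (n : ℕ) (p : RR E) :
    MvPolynomial.aeval ![RatFunc.X, (RatFunc.X : RatFunc E) ^ n] (Th E p) =
      psi E n p := by
  have hC : ((MvPolynomial.aeval ![RatFunc.X, (RatFunc.X : RatFunc E) ^ n]).toRingHom).comp
      (Polynomial.eval₂RingHom MvPolynomial.C (MvPolynomial.X 0))
      = algebraMap (Polynomial E) (RatFunc E) := by
    apply Polynomial.ringHom_ext
    · intro e
      simp [IsScalarTower.algebraMap_apply E (Polynomial E) (RatFunc E)]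
    · simp [RatFunc.algebraMap_X]
  have h : ((MvPolynomial.aeval ![RatFunc.X, (RatFunc.X : RatFunc E) ^ n]).toRingHom).comp
      (Th E) = (psi E n).toRingHom := by
    apply Polynomial.ringHom_ext
    · intro q
      simp only [RingHom.comp_apply]
      rw [show (Th E) (Polynomial.C q)
          = Polynomial.eval₂ MvPolynomial.C (MvPolynomial.X 0) q by simp [Th]]
      rw [show (psi E n).toRingHom (Polynomial.C q)
          = algebraMap (Polynomial E) (RatFunc E) q from psi_C n q]
      exact RingHom.congr_fun hC q
    · simp [Th, psi_X]
  exact RingHom.congr_fun h p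

end

end QHolAux


set_option synthInstance.maxHeartbeats 1000000 in
set_option maxHeartbeats 2000000 in
theorem QHolAux.comp_affine_aux {E : Type} [Field E] [CharZero E] {f : ℕ → RatFunc E}
    (hf : IsQHolonomic f) (α β : ℕ) :
    IsQHolonomic (fun n => f (α * n + β)) := by
  classical
  rcases Nat.eq_zero_or_pos α with hα | hα
  · subst hα
    refine ⟨1, fun j => if j = 0 then -1 else if j = 1 then 1 else 0,
      ⟨0, by norm_num, by norm_num⟩, ?_⟩
    intro n
    rw [Finset.sum_range_succ, Finset.sum_range_one]
    norm_num
  · obtain ⟨d, a, ⟨j₀, hj₀d, hj₀⟩, hrec⟩ := hf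
    set A : ℕ → QHolAux.RR E := fun j => QHolAux.Sh E (a j) with hA
    have hrec' : ∀ n, ∑ j ∈ Finset.range (d + 1),
        QHolAux.psi E n (A j) * f (n + j) = 0 := by
      intro n
      rw [← hrec n]
      exact Finset.sum_congr rfl fun j _ => by rw [hA, QHolAux.Sh_psi]
    have hAj₀ : A j₀ ≠ 0 := by
      intro h
      apply hj₀
      rw [← QHolAux.Th_Sh (a j₀), show QHolAux.Sh E (a j₀) = A j₀ from rfl, h, map_zero]
    set d₀ := Nat.findGreatest (fun j => A j ≠ 0) d with hd₀def
    have hd₀ : A d₀ ≠ 0 := Nat.findGreatest_spec (P := fun j => A j ≠ 0) hj₀d hAj₀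
    have hd₀d : d₀ ≤ d := Nat.findGreatest_le d
    have hgt : ∀ j, d₀ < j → j ≤ d → A j = 0 := by
      intro j h1 h2
      by_contra h
      exact Nat.findGreatest_is_greatest (P := fun j => A j ≠ 0) h1 h2 h
    have hrec₀ : ∀ m, ∑ j ∈ Finset.range (d₀ + 1),
        QHolAux.psi E m (A j) * f (m + j) = 0 := by
      intro m
      rw [← hrec' m]
      apply Finset.sum_subset (Finset.range_subset_range.mpr (by omega))
      intro x hx hnx
      rw [Finset.mem_range] at hx hnx
      rw [hgt x (by omega) (by omega), map_zero, zero_mul]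
    set F := FractionRing (QHolAux.RR E) with hF
    letI : Algebra F (QHolAux.G E) := (QHolAux.PhiF E).toAlgebra
    letI : Module F (QHolAux.G E) := Algebra.toModule
    set gg : ℕ → QHolAux.G E := fun k => QHolAux.ofG E (fun n => f (α * n + β + k)) with hgg
    have hsmul : ∀ (p : QHolAux.RR E) (x : QHolAux.G E),
        (algebraMap (QHolAux.RR E) F p) • x = QHolAux.Phi E p * x := by
      intro p x
      rw [Algebra.smul_def, RingHom.algebraMap_toAlgebra, QHolAux.PhiF_algebraMap]
    have hchi_ne : ∀ (c : ℕ) (p : QHolAux.RR E), p ≠ 0 → QHolAux.chi E c α p ≠ 0 := by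
      intro c p hp h0
      obtain ⟨N, hN⟩ := QHolAux.psi_ne_zero hp
      apply hN (α * N + c) (by nlinarith)
      rw [← QHolAux.psi_chi c α N p, h0, map_zero]
    have hgerm : ∀ r, ∑ j ∈ Finset.range (d₀ + 1),
        QHolAux.Phi E (QHolAux.chi E (β + r) α (A j)) * gg (r + j) = 0 := by
      intro r
      have h1 : ∀ j, QHolAux.Phi E (QHolAux.chi E (β + r) α (A j)) * gg (r + j)
          = QHolAux.ofG E
            (fun n => QHolAux.psi E (α * n + β + r) (A j) * f ((α * n + β + r) + j)) := by
        intro j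
        rw [QHolAux.Phi_apply, hgg, ← map_mul]
        congr 1
        funext n
        show QHolAux.psi E n (QHolAux.chi E (β + r) α (A j)) * f (α * n + β + (r + j)) = _
        rw [QHolAux.psi_chi]
        rw [show α * n + (β + r) = α * n + β + r by omega,
          show α * n + β + (r + j) = (α * n + β + r) + j by omega]
      rw [Finset.sum_congr rfl (fun j _ => h1 j), ← map_sum, ← map_zero (QHolAux.ofG E)]
      congr 1
      funext n
      rw [Finset.sum_apply]
      exact hrec₀ (α * n + β + r)
    set W := Submodule.span F (Set.range (fun i : Fin d₀ => gg (i : ℕ))) with hW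
    have key : ∀ k, gg k ∈ W := by
      intro k
      induction k using Nat.strong_induction_on with
      | _ k ih =>
        by_cases hk : k < d₀
        · exact Submodule.subset_span ⟨⟨k, hk⟩, rfl⟩
        · push_neg at hk
          obtain ⟨r, rfl⟩ : ∃ r, k = r + d₀ := ⟨k - d₀, by omega⟩
          have h0 := hgerm r
          rw [Finset.sum_range_succ] at h0
          set z := QHolAux.chi E (β + r) α (A d₀) with hz
          have hzne : z ≠ 0 := hchi_ne _ _ hd₀
          have hzF : (algebraMap (QHolAux.RR E) F z) ≠ 0 := by
            intro h
            exact hzne (IsFractionRing.injective (QHolAux.RR E) F (by simpa using h))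
          have heq : gg (r + d₀) =
              (algebraMap (QHolAux.RR E) F z)⁻¹ • (QHolAux.Phi E z * gg (r + d₀)) := by
            rw [← hsmul z, smul_smul, inv_mul_cancel₀ hzF, one_smul]
          rw [heq, eq_neg_of_add_eq_zero_right h0]
          refine Submodule.smul_mem _ _ (Submodule.neg_mem _ (Submodule.sum_mem _ ?_))
          intro j hj
          rw [Finset.mem_range] at hj
          rw [← hsmul]
          exact Submodule.smul_mem _ _ (ih (r + j) (by omega))
    haveI : FiniteDimensional F W := FiniteDimensional.span_of_finite F (Set.finite_range _)
    have hdim : Module.finrank F ↥W ≤ d₀ := by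
      refine le_trans (finrank_span_le_card _) ?_
      rw [Set.toFinset_card]
      exact le_trans (Fintype.card_range_le _) (by simp)
    have hnli : ¬ LinearIndependent F
        (fun t : Fin (d₀ + 1) => (⟨gg (α * (t : ℕ)), key _⟩ : W)) := by
      intro h
      have h2 := h.fintype_card_le_finrank
      rw [Fintype.card_fin] at h2
      omega
    obtain ⟨lam, hlamsum, t₀, hlamt₀⟩ := Fintype.not_linearIndependent_iff.mp hnli
    have hG : ∑ t : Fin (d₀ + 1), lam t • gg (α * (t : ℕ)) = 0 := by
      have h2 := congrArg W.subtype hlamsum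
      rw [map_sum, map_zero] at h2
      simpa using h2
    obtain ⟨b, hb⟩ := IsLocalization.exist_integer_multiples
      (nonZeroDivisors (QHolAux.RR E)) Finset.univ lam
    choose rr hrr using fun t => hb t (Finset.mem_univ t)
    have hbne : (b : QHolAux.RR E) ≠ 0 := mem_nonZeroDivisors_iff_ne_zero.mp b.2
    have hbF : algebraMap (QHolAux.RR E) F (b : QHolAux.RR E) ≠ 0 := by
      intro hh
      exact hbne (IsFractionRing.injective (QHolAux.RR E) F (by simp only [map_zero]; exact hh))
    have hrel : ∑ t : Fin (d₀ + 1), QHolAux.Phi E (rr t) * gg (α * (t : ℕ)) = 0 := by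
      have h1 : ∀ t : Fin (d₀ + 1), QHolAux.Phi E (rr t) * gg (α * (t : ℕ))
          = (algebraMap (QHolAux.RR E) F (b : QHolAux.RR E)) • (lam t • gg (α * (t : ℕ))) := by
        intro t
        rw [← hsmul (rr t), hrr t]
        rw [show ((b : QHolAux.RR E) • lam t)
            = (algebraMap (QHolAux.RR E) F (b : QHolAux.RR E)) * lam t from by
          rw [← algebraMap_smul F (b : QHolAux.RR E) (lam t), smul_eq_mul], mul_smul]
      rw [Finset.sum_congr rfl (fun t _ => h1 t), ← Finset.smul_sum, hG, smul_zero]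
    have hrrt₀ : rr t₀ ≠ 0 := by
      intro h
      apply hlamt₀
      have h2 := hrr t₀
      rw [h, map_zero, Algebra.smul_def] at h2
      exact ((mul_eq_zero.mp h2.symm).resolve_left hbF)
    have hev : ∀ᶠ n in Filter.atTop,
        ∑ t : Fin (d₀ + 1), QHolAux.psi E n (rr t) * f (α * n + β + α * (t : ℕ)) = 0 := by
      rw [← QHolAux.ofG_eq_zero]
      rw [show (QHolAux.ofG E
          (fun n => ∑ t : Fin (d₀ + 1), QHolAux.psi E n (rr t) * f (α * n + β + α * (t : ℕ))))
          = ∑ t : Fin (d₀ + 1), QHolAux.Phi E (rr t) * gg (α * (t : ℕ)) from ?_, hrel]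
      rw [show (fun n => ∑ t : Fin (d₀ + 1),
            QHolAux.psi E n (rr t) * f (α * n + β + α * (t : ℕ)))
          = ∑ t : Fin (d₀ + 1),
            (fun n => QHolAux.psi E n (rr t) * f (α * n + β + α * (t : ℕ))) from by
        funext n; rw [Finset.sum_apply]]
      rw [map_sum]
      exact Finset.sum_congr rfl fun t _ => by rw [QHolAux.Phi_apply, hgg, ← map_mul]; rfl
    obtain ⟨N', hN'⟩ := Filter.eventually_atTop.mp hev
    set Q : QHolAux.RR E := ∏ k ∈ Finset.range N',
      (Polynomial.X - Polynomial.C ((Polynomial.X : Polynomial E) ^ k)) with hQdef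
    have hQne : Q ≠ 0 :=
      Finset.prod_ne_zero_iff.mpr (fun k _ => Polynomial.X_sub_C_ne_zero _)
    have hQzero : ∀ n < N', QHolAux.psi E n Q = 0 := by
      intro n hn
      rw [hQdef, map_prod]
      apply Finset.prod_eq_zero (Finset.mem_range.mpr hn)
      rw [map_sub]
      rw [show QHolAux.psi E n (Polynomial.C ((Polynomial.X : Polynomial E) ^ n))
          = (RatFunc.X : RatFunc E) ^ n from by
        rw [QHolAux.psi_C, map_pow, RatFunc.algebraMap_X]]
      rw [QHolAux.psi_X, sub_self]
    refine ⟨d₀, fun t => if h : t < d₀ + 1 then QHolAux.Th E (Q * rr ⟨t, h⟩) else 0,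
      ⟨(t₀ : ℕ), by omega, ?_⟩, ?_⟩
    · have hlt : (t₀ : ℕ) < d₀ + 1 := t₀.isLt
      simp only [dif_pos hlt, Fin.eta]
      have hQr : Q * rr t₀ ≠ 0 := mul_ne_zero hQne hrrt₀
      obtain ⟨N2, hN2⟩ := QHolAux.psi_ne_zero hQr
      intro h
      apply hN2 N2 le_rfl
      rw [← QHolAux.Th_psi N2, h, map_zero]
    · intro n
      rw [← Fin.sum_univ_eq_sum_range]
      have hterm : ∀ i : Fin (d₀ + 1),
          (MvPolynomial.aeval ![RatFunc.X, (RatFunc.X : RatFunc E) ^ n]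
            (if h : (i : ℕ) < d₀ + 1 then QHolAux.Th E (Q * rr ⟨i, h⟩) else 0))
            * f (α * (n + (i : ℕ)) + β)
          = QHolAux.psi E n Q * (QHolAux.psi E n (rr i) * f (α * n + β + α * (i : ℕ))) := by
        intro i
        rw [dif_pos i.isLt, Fin.eta, QHolAux.Th_psi, map_mul,
          show α * (n + (i : ℕ)) + β = α * n + β + α * (i : ℕ) by ring]
        ring
      rw [Finset.sum_congr rfl (fun i _ => hterm i), ← Finset.mul_sum]
      by_cases hn : N' ≤ n
      · rw [hN' n hn, mul_zero]
      · rw [hQzero n (by omega), zero_mul]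


/-- If `f` is `q`-holonomic and `h(n) = αn + β` is an affine map with `α, β ∈ ℕ`, then
the composite `n ↦ f(αn + β)` is `q`-holonomic. -/
theorem IsQHolonomic.comp_affine {E : Type} [Field E] [CharZero E] {f : ℕ → RatFunc E}
    (hf : IsQHolonomic f) (α β : ℕ) :
    IsQHolonomic (fun n => f (α * n + β)) :=
  QHolAux.comp_affine_aux hf α β
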